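/- The Poisson bracket {φ,ψ} = Σ_{i,j} (∂φ/∂f_i) u_{ij} (∂ψ/∂f_j) on C(α;f) is invariant under the Bäcklund transformations: for every i and all φ, ψ ∈ C(α;f), one has s_i({φ,ψ}) = {s_i(φ), s_i(ψ)}. -/

import Mathlib

set_option maxHeartbeats 4000000
set_option synthInstance.maxHeartbeats 400000


open MvPolynomial

noncomputable section

/-- The field `ℂ(α₀,…,α_l; f₀,…,f_l)` of rational functions. -/
abbrev K (l : ℕ) : Type := FractionRing (MvPolynomial (Fin (l+1) ⊕ Fin (l+1)) ℂ)

/-- The generator `α_i`. -/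
def av (l : ℕ) (i : Fin (l+1)) : K l :=
  algebraMap (MvPolynomial (Fin (l+1) ⊕ Fin (l+1)) ℂ) (K l) (X (Sum.inl i))

/-- The generator `f_i`. -/
def fv (l : ℕ) (i : Fin (l+1)) : K l :=
  algebraMap (MvPolynomial (Fin (l+1) ⊕ Fin (l+1)) ℂ) (K l) (X (Sum.inr i))

/-- `s` is the Bäcklund transformation `s_i`. -/
def IsBT (l : ℕ) (i : Fin (l+1)) (s : K l ≃+* K l) : Prop :=
  s (av l i) = - av l i ∧
  s (av l (i+1)) = av l (i+1) + av l i ∧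
  s (av l (i-1)) = av l (i-1) + av l i ∧
  (∀ j : Fin (l+1), j ≠ i → j ≠ i+1 → j ≠ i-1 → s (av l j) = av l j) ∧
  s (fv l i) = fv l i ∧
  s (fv l (i+1)) = fv l (i+1) + av l i / fv l i ∧
  s (fv l (i-1)) = fv l (i-1) - av l i / fv l i ∧
  (∀ j : Fin (l+1), j ≠ i → j ≠ i+1 → j ≠ i-1 → s (fv l j) = fv l j)


/-- `D` is the partial derivation `∂/∂f_i` of the rational function field `ℂ(α;f)`. -/
def IsPD (l : ℕ) (i : Fin (l+1)) (D : K l → K l) : Prop :=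
  (∀ x y : K l, D (x + y) = D x + D y) ∧
  (∀ x y : K l, D (x * y) = x * D y + D x * y) ∧
  (∀ c : ℂ, D (algebraMap (MvPolynomial (Fin (l+1) ⊕ Fin (l+1)) ℂ) (K l) (C c)) = 0) ∧
  (∀ j : Fin (l+1), D (fv l j) = if j = i then 1 else 0) ∧
  (∀ j : Fin (l+1), D (av l j) = 0)

/-- The matrix `U`: `u_{i,i+1} = 1`, `u_{i,i-1} = -1`, `u_{ij} = 0` otherwise. -/
def uMat (l : ℕ) (i j : Fin (l+1)) : K l :=
  if j = i + 1 then 1 else if j = i - 1 then -1 else 0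

/-- The Poisson bracket is invariant under the Bäcklund transformations:
`s_i({φ,ψ}) = {s_i(φ), s_i(ψ)}`. -/
abbrev Rl (l : ℕ) := MvPolynomial (Fin (l+1) ⊕ Fin (l+1)) ℂ

abbrev am (l : ℕ) : Rl l →+* K l := algebraMap (Rl l) (K l)

theorem aux_isUnit_eq_C {F : Type} [Field F] (σ : Type) [Finite σ] :
    ∀ p : MvPolynomial σ F, IsUnit p → ∃ c : F, p = C c := by
  refine Finite.induction_empty_option (P := fun σ => ∀ p : MvPolynomial σ F, IsUnit p → ∃ c : F, p = C c) ?_ ?_ ?_ σ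
  · intro α β e ih p hp
    obtain ⟨c, hc⟩ := ih _ (hp.map (renameEquiv F e).symm)
    refine ⟨c, ?_⟩
    have := congrArg (renameEquiv F e) hc
    simpa using this
  · intro p _
    obtain ⟨c, rfl⟩ := C_surjective PEmpty p
    exact ⟨c, rfl⟩
  · intro α _ ih p hp
    have hq : IsUnit (optionEquivLeft F α p) := hp.map (optionEquivLeft F α)
    rw [Polynomial.isUnit_iff_coeff_isUnit_isNilpotent] at hq
    obtain ⟨h0, hn⟩ := hq
    obtain ⟨c, hc⟩ := ih _ h0
    have hep : optionEquivLeft F α p = Polynomial.C ((optionEquivLeft F α p).coeff 0) := by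
      refine Polynomial.ext fun n => ?_
      cases n with
      | zero => simp
      | succ n =>
        have hz := (hn (n+1) (Nat.succ_ne_zero n)).eq_zero
        rw [Polynomial.coeff_C, if_neg (Nat.succ_ne_zero n), hz]
    refine ⟨c, (optionEquivLeft F α).injective ?_⟩
    rw [hep, hc, optionEquivLeft_C]

open UniqueFactorizationMonoid in
theorem eq_C_of_roots (l : ℕ) (w : K l) (h : ∀ n : ℕ, 0 < n → ∃ v : K l, v ^ n = w) :
    ∃ c : ℂ, w = am l (C c) := by
  classical
  by_cases hw : w = 0
  · exact ⟨0, by simp [hw]⟩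
  letI : NormalizationMonoid (Rl l) := UniqueFactorizationMonoid.normalizationMonoid.toNormalizationMonoid
  obtain ⟨p, q, hq, hpq⟩ := IsFractionRing.div_surjective (A := Rl l) w
  have hq0 : q ≠ 0 := nonZeroDivisors.ne_zero hq
  have hq0' : am l q ≠ 0 := fun hh => hq0 ((IsFractionRing.to_map_eq_zero_iff (K := K l)).1 hh)
  have hp0 : p ≠ 0 := by
    intro h0
    apply hw
    rw [← hpq, h0, map_zero, zero_div]
  have hp0' : am l p ≠ 0 := fun hh => hp0 ((IsFractionRing.to_map_eq_zero_iff (K := K l)).1 hh)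
  have key : normalizedFactors p = normalizedFactors q := by
    ext r
    set np := Multiset.count r (normalizedFactors p) with hnp
    set nq := Multiset.count r (normalizedFactors q) with hnq
    obtain ⟨v, hv⟩ := h (np + nq + 1) (by omega)
    set n := np + nq + 1 with hn
    obtain ⟨a, b, hb, hab⟩ := IsFractionRing.div_surjective (A := Rl l) v
    have hb0 : b ≠ 0 := nonZeroDivisors.ne_zero hb
    have hb0' : am l b ≠ 0 := fun hh => hb0 ((IsFractionRing.to_map_eq_zero_iff (K := K l)).1 hh)
    have hv0 : v ≠ 0 := by
      intro h0
      rw [h0, zero_pow (by omega)] at hv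
      exact hw hv.symm
    have ha0 : a ≠ 0 := by
      intro h0
      rw [h0, map_zero, zero_div] at hab
      exact hv0 hab.symm
    have main : p * b ^ n = q * a ^ n := by
      apply IsFractionRing.injective (Rl l) (K l)
      have h1 : (am l a / am l b) ^ n = am l p / am l q := by rw [hab, hv, hpq]
      rw [div_pow, div_eq_div_iff (pow_ne_zero _ hb0') hq0'] at h1
      rw [map_mul, map_mul, map_pow, map_pow]
      exact h1.symm.trans (mul_comm _ _)
    have hcount := congrArg (fun t => Multiset.count r (normalizedFactors t)) main
    simp only [normalizedFactors_mul hp0 (pow_ne_zero _ hb0),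
      normalizedFactors_mul hq0 (pow_ne_zero _ ha0), normalizedFactors_pow,
      Multiset.count_add, Multiset.count_nsmul] at hcount
    -- hcount : np + n * count b = nq + n * count a
    set ca := Multiset.count r (normalizedFactors a)
    set cb := Multiset.count r (normalizedFactors b)
    have hdvd : (n : ℤ) ∣ (np : ℤ) - nq := ⟨(ca : ℤ) - cb, by push_cast at hcount ⊢; linarith⟩
    have habs : |(np : ℤ) - nq| < (n : ℤ) := by
      rw [abs_lt]
      constructor <;> [skip; skip] <;> push_cast <;> omega
    have := Int.eq_zero_of_abs_lt_dvd hdvd habs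
    omega
  have hass : Associated p q :=
    (associated_iff_normalizedFactors_eq_normalizedFactors hp0 hq0).2 key
  obtain ⟨u, hu⟩ := hass
  obtain ⟨c, hc⟩ := aux_isUnit_eq_C _ _ u.isUnit
  have hc0 : (c : ℂ) ≠ 0 := by
    intro h0
    have : (u : Rl l) ≠ 0 := u.ne_zero
    rw [hc, h0, map_zero] at this
    exact this rfl
  refine ⟨c⁻¹, ?_⟩
  rw [← hpq]
  have hq' : q = p * C c := by rw [← hu, hc]
  rw [hq', map_mul, div_mul_eq_div_div, div_self hp0']
  have hmc : am l (C c⁻¹) * am l (C c) = 1 := by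
    rw [← map_mul, ← C_mul, inv_mul_cancel₀ hc0, C_1, map_one]
  exact (eq_one_div_of_mul_eq_one_left hmc).symm

def IsDer (l : ℕ) (D : K l → K l) : Prop :=
  (∀ x y : K l, D (x + y) = D x + D y) ∧ (∀ x y : K l, D (x * y) = x * D y + D x * y)

theorem IsDer.zero' {l : ℕ} {D : K l → K l} (hD : IsDer l D) : D 0 = 0 := by
  have := hD.1 0 0
  rw [add_zero] at this
  exact left_eq_add.mp this

theorem IsDer.neg' {l : ℕ} {D : K l → K l} (hD : IsDer l D) (x : K l) : D (-x) = - D x := by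
  have := hD.1 x (-x)
  rw [add_neg_cancel, hD.zero'] at this
  exact eq_neg_of_add_eq_zero_right this.symm

theorem IsDer.one' {l : ℕ} {D : K l → K l} (hD : IsDer l D) : D 1 = 0 := by
  have := hD.2 1 1
  rw [mul_one, one_mul, mul_one] at this
  exact left_eq_add.mp this

theorem IsDer.inv' {l : ℕ} {D : K l → K l} (hD : IsDer l D) (x : K l) (hx : x ≠ 0) :
    D x⁻¹ = - (D x) * x⁻¹ * x⁻¹ := by
  have h1 : x * x⁻¹ = 1 := mul_inv_cancel₀ hx
  have h2 := congrArg D h1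
  rw [hD.2, hD.one'] at h2
  have h3 : x * D x⁻¹ = - (D x * x⁻¹) := eq_neg_of_add_eq_zero_left h2
  have h4 : D x⁻¹ = x⁻¹ * (x * D x⁻¹) := by
    rw [← mul_assoc, inv_mul_cancel₀ hx, one_mul]
  rw [h4, h3]
  ring

theorem der_ext {l : ℕ} {D E : K l → K l} (hD : IsDer l D) (hE : IsDer l E)
    (hC : ∀ c : ℂ, D (am l (C c)) = E (am l (C c)))
    (hX : ∀ n, D (am l (X n)) = E (am l (X n))) : ∀ x, D x = E x := by
  have hR : ∀ p : Rl l, D (am l p) = E (am l p) := by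
    intro p
    induction p using MvPolynomial.induction_on with
    | C c => exact hC c
    | add p q hp hq => rw [map_add, hD.1, hE.1, hp, hq]
    | mul_X p n hp => rw [map_mul, hD.2, hE.2, hp, hX n]
  intro x
  obtain ⟨p, q, hq, hpq⟩ := IsFractionRing.div_surjective (A := Rl l) x
  have hq0 : q ≠ 0 := nonZeroDivisors.ne_zero hq
  have hq0' : am l q ≠ 0 := fun hh => hq0 ((IsFractionRing.to_map_eq_zero_iff (K := K l)).1 hh)
  have hxq : x * am l q = am l p := by
    rw [← hpq, div_mul_cancel₀ _ hq0']
  have h1 := congrArg D hxq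
  have h2 := congrArg E hxq
  rw [hD.2] at h1
  rw [hE.2] at h2
  have h3 : x * D (am l q) + D x * am l q = x * E (am l q) + E x * am l q := by
    rw [h1, h2, hR p]
  rw [hR q] at h3
  have h4 : D x * am l q = E x * am l q := add_left_cancel h3
  exact mul_right_cancel₀ hq0' h4

section FinFacts
variable {l : ℕ} (hl : 2 ≤ l)
include hl

open Fin.NatCast in
theorem fin_one_ne_zero' : (1 : Fin (l+1)) ≠ 0 := by
  have : ((1 : ℕ) : Fin (l+1)) = (1 : Fin (l+1)) := Nat.cast_one
  rw [← this, Ne, Fin.natCast_eq_zero]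
  intro hd
  have := Nat.le_of_dvd one_pos hd
  omega

open Fin.NatCast in
theorem fin_two_ne_zero' : (2 : Fin (l+1)) ≠ 0 := by
  have : ((2 : ℕ) : Fin (l+1)) = (2 : Fin (l+1)) := Nat.cast_ofNat
  rw [← this, Ne, Fin.natCast_eq_zero]
  intro hd
  have := Nat.le_of_dvd (by norm_num) hd
  omega

theorem fin_add_one_ne (a : Fin (l+1)) : a + 1 ≠ a := by
  intro h
  exact fin_one_ne_zero' hl (by rwa [add_eq_left] at h)

theorem fin_sub_one_ne (a : Fin (l+1)) : a - 1 ≠ a := by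
  intro h
  apply fin_one_ne_zero' hl
  have h2 : a - 1 + 1 = a + 1 := by rw [h]
  rw [sub_add_cancel] at h2
  rwa [left_eq_add] at h2

theorem fin_add_one_ne_sub_one (a : Fin (l+1)) : a + 1 ≠ a - 1 := by
  intro h
  apply fin_two_ne_zero' hl
  have h2 : a + 1 + 1 = a - 1 + 1 := by rw [h]
  rw [sub_add_cancel, add_assoc] at h2
  have h3 : (1 : Fin (l+1)) + 1 = 0 := by rwa [add_eq_left] at h2
  rw [show (1 : Fin (l+1)) + 1 = 2 by ext; simp [Fin.val_add]] at h3
  exact h3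

theorem fin_add_two_ne (a : Fin (l+1)) : a + 1 + 1 ≠ a := by
  intro h
  apply fin_two_ne_zero' hl
  rw [add_assoc, show (1 : Fin (l+1)) + 1 = 2 by ext; simp [Fin.val_add], add_eq_left] at h
  exact h

theorem fin_sub_two_ne (a : Fin (l+1)) : a - 1 - 1 ≠ a := by
  intro h
  apply fin_two_ne_zero' hl
  have h2 : a - 1 - 1 + (1 + 1) = a + (1+1) := by rw [h]
  rw [← add_assoc, sub_add_cancel, sub_add_cancel, show (1 : Fin (l+1)) + 1 = 2 by ext; simp [Fin.val_add], left_eq_add] at h2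
  exact h2
end FinFacts

theorem stmt7 (l : ℕ) (hl : 2 ≤ l) (D : Fin (l+1) → K l → K l)
    (hD : ∀ i, IsPD l i (D i)) (i : Fin (l+1)) (s : K l ≃+* K l) (hs : IsBT l i s) :
    ∀ φ ψ : K l,
      (let pb : K l → K l → K l := fun φ ψ =>
        ∑ i' : Fin (l+1), ∑ j : Fin (l+1), D i' φ * uMat l i' j * D j ψ
      s (pb φ ψ) = pb (s φ) (s ψ)) := by
  classical
  intro φ ψ
  show s (∑ a : Fin (l+1), ∑ b : Fin (l+1), D a φ * uMat l a b * D b ψ)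
      = ∑ a : Fin (l+1), ∑ b : Fin (l+1), D a (s φ) * uMat l a b * D b (s ψ)
  obtain ⟨hs1, hs2, hs3, hs4, hs5, hs6, hs7, hs8⟩ := hs
  set cc : K l := av l i / (fv l i)^2 with hcc
  have hDder : ∀ j, IsDer l (D j) := fun j => ⟨(hD j).1, (hD j).2.1⟩
  have hfv0 : ∀ k, fv l k ≠ 0 := by
    intro k hk
    exact X_ne_zero _ ((IsFractionRing.to_map_eq_zero_iff (K := K l)).1 hk)
  -- symm values
  have hsymm_av : s.symm (av l i) = - av l i := by
    have h := congrArg s.symm hs1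
    rw [RingEquiv.symm_apply_apply, map_neg] at h
    exact neg_eq_iff_eq_neg.mp h.symm
  have hsymm_fv : s.symm (fv l i) = fv l i := by
    conv_lhs => rw [← hs5]
    rw [RingEquiv.symm_apply_apply]
  -- Fin inequalities
  have ne1 : i + 1 ≠ i := fin_add_one_ne hl i
  have ne2 : i - 1 ≠ i := fin_sub_one_ne hl i
  have ne3 : i + 1 ≠ i - 1 := fin_add_one_ne_sub_one hl i
  -- chain rule
  have chain : ∀ (j : Fin (l+1)) (x : K l),
      D j (s x) = s (D j x + (if j = i then cc * (D (i+1) x - D (i-1) x) else 0)) := by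
    intro j
    have hTder : IsDer l (fun x => D j x + (if j = i then cc * (D (i+1) x - D (i-1) x) else 0)) := by
      constructor
      · intro x y
        simp only [(hD j).1, (hD (i+1)).1, (hD (i-1)).1]
        split_ifs <;> ring
      · intro x y
        simp only [(hD j).2.1, (hD (i+1)).2.1, (hD (i-1)).2.1]
        split_ifs <;> ring
    have hEder : IsDer l (fun x => s.symm (D j (s x))) := by
      constructor
      · intro x y
        simp only [map_add, (hD j).1]
      · intro x y
        simp only [map_mul, (hD j).2.1, map_add, RingEquiv.symm_apply_apply]
    have hsav : ∀ k, D j (s (av l k)) = 0 := by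
      intro k
      by_cases h1 : k = i
      · subst h1
        rw [hs1, (hDder j).neg', (hD j).2.2.2.2, neg_zero]
      by_cases h2 : k = i+1
      · subst h2
        rw [hs2, (hD j).1, (hD j).2.2.2.2, (hD j).2.2.2.2, add_zero]
      by_cases h3 : k = i-1
      · subst h3
        rw [hs3, (hD j).1, (hD j).2.2.2.2, (hD j).2.2.2.2, add_zero]
      · rw [hs4 k h1 h2 h3, (hD j).2.2.2.2]
    have heq := der_ext hEder hTder (by
        intro c
        show s.symm (D j (s (am l (C c)))) = D j (am l (C c)) +
          (if j = i then cc * (D (i+1) (am l (C c)) - D (i-1) (am l (C c))) else 0)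
        obtain ⟨c', hc'⟩ := eq_C_of_roots l (s (am l (C c))) (by
          intro n hn
          obtain ⟨d, hd⟩ := IsAlgClosed.exists_pow_nat_eq c hn
          refine ⟨s (am l (C d)), ?_⟩
          rw [← map_pow, ← map_pow, ← C_pow, hd])
        rw [hc', (hD j).2.2.1, map_zero, (hD j).2.2.1, (hD (i+1)).2.2.1, (hD (i-1)).2.2.1]
        split_ifs <;> ring)
      (by
        intro n
        cases n with
        | inl k =>
          show s.symm (D j (s (av l k))) = D j (av l k) +
            (if j = i then cc * (D (i+1) (av l k) - D (i-1) (av l k)) else 0)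
          rw [hsav k, map_zero, (hD j).2.2.2.2, (hD (i+1)).2.2.2.2, (hD (i-1)).2.2.2.2]
          split_ifs <;> ring
        | inr k =>
          show s.symm (D j (s (fv l k))) = D j (fv l k) +
            (if j = i then cc * (D (i+1) (fv l k) - D (i-1) (fv l k)) else 0)
          rw [(hD j).2.2.2.1, (hD (i+1)).2.2.2.1, (hD (i-1)).2.2.2.1]
          by_cases hk1 : k = i
          · rw [hk1]
            rw [hs5, (hD j).2.2.2.1, apply_ite s.symm, map_one, map_zero,
              if_neg (Ne.symm ne1), if_neg (Ne.symm ne2)]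
            by_cases hji : j = i
            · rw [if_pos hji.symm, if_pos hji]
              ring
            · rw [if_neg (fun h : i = j => hji h.symm), if_neg hji]
              ring
          by_cases hk2 : k = i+1
          · rw [hk2]
            rw [hs6, (hD j).1, (hD j).2.2.2.1, div_eq_mul_inv, (hD j).2.1,
              (hD j).2.2.2.2, zero_mul, add_zero,
              (hDder j).inv' _ (hfv0 i), (hD j).2.2.2.1,
              if_pos (rfl : i+1 = i+1), if_neg ne3]
            by_cases hji : j = i
            · rw [if_neg (fun h : i+1 = j => ne1 (h.trans hji)),
                if_pos hji.symm, if_pos hji]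
              rw [zero_add, map_mul, map_mul, map_mul, map_neg, map_one, map_inv₀,
                hsymm_av, hsymm_fv, hcc]
              have hf := hfv0 i
              field_simp
              ring
            · rw [if_neg (fun h : i = j => hji h.symm), if_neg hji]
              simp only [neg_zero, zero_mul, mul_zero, add_zero, apply_ite s.symm,
                map_one, map_zero]
          by_cases hk3 : k = i-1
          · rw [hk3]
            rw [hs7, sub_eq_add_neg, (hD j).1, (hDder j).neg', (hD j).2.2.2.1,
              div_eq_mul_inv, (hD j).2.1, (hD j).2.2.2.2, zero_mul, add_zero,
              (hDder j).inv' _ (hfv0 i), (hD j).2.2.2.1,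
              if_neg (fun h : i-1 = i+1 => ne3 h.symm), if_pos (rfl : i-1 = i-1)]
            by_cases hji : j = i
            · rw [if_neg (fun h : i-1 = j => ne2 (h.trans hji)),
                if_pos hji.symm, if_pos hji]
              rw [zero_add, map_neg, map_mul, map_mul, map_mul, map_neg, map_one, map_inv₀,
                hsymm_av, hsymm_fv, hcc]
              have hpow : (fv l i ^ 2)⁻¹ = (fv l i)⁻¹ * (fv l i)⁻¹ := by rw [sq, mul_inv]
              rw [div_eq_mul_inv, hpow]
              ring
            · rw [if_neg (fun h : i = j => hji h.symm), if_neg hji]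
              simp only [neg_zero, zero_mul, mul_zero, add_zero, neg_zero,
                apply_ite s.symm, map_one, map_zero]
          · rw [hs8 k hk1 hk2 hk3, (hD j).2.2.2.1, if_neg hk2, if_neg hk3,
              apply_ite s.symm, map_one, map_zero]
            split_ifs <;> ring)
    intro x
    exact ((s.apply_symm_apply (D j (s x))).symm).trans (congrArg s (heq x))
  -- u is fixed by s
  have hsu : ∀ a b, s (uMat l a b) = uMat l a b := by
    intro a b
    simp only [uMat]
    split_ifs <;> simp
  -- inner sum computation
  have inner : ∀ (w : Fin (l+1) → K l) (x : K l) (a : Fin (l+1)),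
      ∑ b, x * uMat l a b * w b = x * (w (a+1) - w (a-1)) := by
    intro w x a
    have hpt : ∀ b, x * uMat l a b * w b
        = (if b = a+1 then x * w b else 0) + (if b = a-1 then -(x * w b) else 0) := by
      intro b
      simp only [uMat]
      split_ifs with h1 h2
      · exact absurd (h1.symm.trans h2) (fin_add_one_ne_sub_one hl a)
      · ring
      · ring
      · ring
    simp only [hpt, Finset.sum_add_distrib, Finset.sum_ite_eq', Finset.mem_univ, if_true]
    ring
  -- the key combinatorial identity
  have key : ∀ g h : Fin (l+1) → K l,
      (∑ a, ∑ b, (g a + (if a = i then cc * (g (i+1) - g (i-1)) else 0)) * uMat l a b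
        * (h b + (if b = i then cc * (h (i+1) - h (i-1)) else 0)))
      = ∑ a, ∑ b, g a * uMat l a b * h b := by
    intro g h
    have lhs1 : ∀ a : Fin (l+1), (∑ b, (g a + (if a = i then cc * (g (i+1) - g (i-1)) else 0)) * uMat l a b
        * (h b + (if b = i then cc * (h (i+1) - h (i-1)) else 0)))
        = (g a + (if a = i then cc * (g (i+1) - g (i-1)) else 0))
          * ((h (a+1) + (if a+1 = i then cc * (h (i+1) - h (i-1)) else 0))
            - (h (a-1) + (if a-1 = i then cc * (h (i+1) - h (i-1)) else 0))) :=
      fun a => inner (fun b => h b + (if b = i then cc * (h (i+1) - h (i-1)) else 0)) _ a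
    have rhs1 : ∀ a : Fin (l+1), (∑ b, g a * uMat l a b * h b) = g a * (h (a+1) - h (a-1)) :=
      fun a => inner h (g a) a
    rw [Finset.sum_congr rfl (fun a _ => lhs1 a), Finset.sum_congr rfl (fun a _ => rhs1 a)]
    have point : ∀ a : Fin (l+1),
        (g a + (if a = i then cc * (g (i+1) - g (i-1)) else 0))
          * ((h (a+1) + (if a+1 = i then cc * (h (i+1) - h (i-1)) else 0))
            - (h (a-1) + (if a-1 = i then cc * (h (i+1) - h (i-1)) else 0)))
        = g a * (h (a+1) - h (a-1))
          + ((if a = i then cc * (g (i+1) - g (i-1)) * (h (i+1) - h (i-1)) else 0)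
            + (if a = i-1 then g (i-1) * (cc * (h (i+1) - h (i-1))) else 0)
            - (if a = i+1 then g (i+1) * (cc * (h (i+1) - h (i-1))) else 0)) := by
      intro a
      by_cases ha1 : a = i
      · rw [ha1, if_pos rfl, if_pos rfl, if_neg ne1, if_neg ne2,
          if_neg (fun h : i = i-1 => ne2 h.symm), if_neg (fun h : i = i+1 => ne1 h.symm)]
        ring
      by_cases ha2 : a = i+1
      · rw [ha2, if_neg ne1, if_neg ne1, if_neg (fin_add_two_ne hl i),
          if_pos (show i+1-1 = i from add_sub_cancel_right i 1), if_neg ne3, if_pos rfl]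
        ring
      by_cases ha3 : a = i-1
      · rw [ha3, if_neg ne2, if_neg ne2, if_pos (show i-1+1 = i from sub_add_cancel i 1),
          if_neg (fin_sub_two_ne hl i), if_pos rfl, if_neg (fun h : i-1 = i+1 => ne3 h.symm)]
        ring
      · rw [if_neg ha1, if_neg ha1,
          if_neg (fun h : a+1 = i => ha3 (by rw [← h, add_sub_cancel_right])),
          if_neg (fun h : a-1 = i => ha2 (by rw [← h, sub_add_cancel])),
          if_neg ha3, if_neg ha2]
        ring
    rw [Finset.sum_congr rfl (fun a _ => point a)]
    rw [Finset.sum_add_distrib]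
    have hz : (∑ a : Fin (l+1),
        ((if a = i then cc * (g (i+1) - g (i-1)) * (h (i+1) - h (i-1)) else 0)
          + (if a = i-1 then g (i-1) * (cc * (h (i+1) - h (i-1))) else 0)
          - (if a = i+1 then g (i+1) * (cc * (h (i+1) - h (i-1))) else 0))) = 0 := by
      rw [Finset.sum_sub_distrib, Finset.sum_add_distrib]
      simp only [Finset.sum_ite_eq', Finset.mem_univ, if_true]
      ring
    rw [hz, add_zero]
  -- conclude
  calc s (∑ a : Fin (l+1), ∑ b : Fin (l+1), D a φ * uMat l a b * D b ψ)
      = s (∑ a : Fin (l+1), ∑ b : Fin (l+1),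
          (D a φ + (if a = i then cc * (D (i+1) φ - D (i-1) φ) else 0)) * uMat l a b
          * (D b ψ + (if b = i then cc * (D (i+1) ψ - D (i-1) ψ) else 0))) := by
        rw [key (fun a => D a φ) (fun b => D b ψ)]
    _ = ∑ a : Fin (l+1), ∑ b : Fin (l+1), D a (s φ) * uMat l a b * D b (s ψ) := by
        rw [map_sum]
        refine Finset.sum_congr rfl fun a _ => ?_
        rw [map_sum]
        refine Finset.sum_congr rfl fun b _ => ?_
        rw [map_mul, map_mul, hsu, ← chain a φ, ← chain b ψ]
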